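/- Let k ≥ 0 be an index with s_k ≡ 3 (mod 4) and t_k = 2^{m+f} t' where t' is odd and f is an integer with 1−m ≤ f ≤ e−2. Then t_{k+L} = 2^{m+f} t'' for an odd integer t'' with t'' ≡ t' (mod 4), and the Kronecker symbols satisfy (s_{k+L}/t_{k+L}) = (s_k/t_k). -/

import Mathlib

/-- The Kronecker symbol `(s/t)` for a natural denominator `t`: writing `t = 2^j * t'`
with `t'` odd, `(s/t) = (s/2)^j * (s/t')`, where `(s/t')` is the Jacobi symbol and
`(s/2) = 1` if `s ≡ ±1 (mod 8)`, `(s/2) = -1` if `s ≡ ±3 (mod 8)` (and `0` for even `s`). -/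
def kron (s : ℤ) (t : ℕ) : ℤ :=
  (if s % 8 = 1 ∨ s % 8 = 7 then 1
   else if s % 8 = 3 ∨ s % 8 = 5 then -1 else 0) ^ padicValNat 2 t
    * jacobiSym s (t / 2 ^ padicValNat 2 t)

def kronChi (s : ℤ) : ℤ :=
  if s % 8 = 1 ∨ s % 8 = 7 then 1
   else if s % 8 = 3 ∨ s % 8 = 5 then -1 else 0

lemma kron_def (s : ℤ) (t : ℕ) :
    kron s t = kronChi s ^ padicValNat 2 t * jacobiSym s (t / 2 ^ padicValNat 2 t) := rfl

lemma kronChi_pm {z : ℤ} (hz : Odd z) : kronChi z = 1 ∨ kronChi z = -1 := by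
  have h2 : z % 2 = 1 := Int.odd_iff.mp hz
  have h8 : z % 8 = 1 ∨ z % 8 = 3 ∨ z % 8 = 5 ∨ z % 8 = 7 := by omega
  rcases h8 with h | h | h | h <;> simp [kronChi, h]

lemma kronChi_eq_chi8 {z : ℤ} (hz : Odd z) : kronChi z = ZMod.χ₈ (z : ZMod 8) := by
  have h2 : z % 2 = 1 := Int.odd_iff.mp hz
  have h8 : z % 8 = 1 ∨ z % 8 = 3 ∨ z % 8 = 5 ∨ z % 8 = 7 := by omega
  rw [ZMod.χ₈_int_eq_if_mod_eight]
  rcases h8 with h | h | h | h <;> simp [kronChi, h, h2]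

lemma kron_two_pow_mul (S : ℤ) (g : ℕ) (n : ℕ) (hn : Odd n) (hn0 : 0 < n) :
    kron S (2 ^ g * n) = kronChi S ^ g * jacobiSym S n := by
  haveI : Fact (Nat.Prime 2) := ⟨Nat.prime_two⟩
  have hval : padicValNat 2 (2 ^ g * n) = g := by
    rw [padicValNat.mul (pow_ne_zero _ two_ne_zero) hn0.ne',
      padicValNat.prime_pow, padicValNat.eq_zero_of_not_dvd (by
        rw [Nat.two_dvd_ne_zero]; exact Nat.odd_iff.mp hn), add_zero]
  rw [kron_def, hval, Nat.mul_div_cancel_left _ (pow_pos (by norm_num) g)]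

lemma conv_shift (a s t : ℤ → ℤ) (L : ℕ) (hL : 1 ≤ L)
    (hs_neg : s (-1) = 1) (ht_neg : t (-1) = 0) (hs_zero : s 0 = a 0) (ht_zero : t 0 = 1)
    (hs_rec : ∀ k : ℤ, 1 ≤ k → s k = a k * s (k-1) + s (k-2))
    (ht_rec : ∀ k : ℤ, 1 ≤ k → t k = a k * t (k-1) + t (k-2))
    (aper : ∀ j : ℤ, 0 ≤ j → a (j + L) = a j) :
    ∀ n : ℕ, s ((n:ℤ) - 1 + L) = s ((L:ℤ)-1) * s ((n:ℤ)-1) + s ((L:ℤ)-2) * t ((n:ℤ)-1)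
      ∧ t ((n:ℤ)-1+L) = t ((L:ℤ)-1) * s ((n:ℤ)-1) + t ((L:ℤ)-2) * t ((n:ℤ)-1) := by
  intro n
  induction n using Nat.strong_induction_on with
  | _ n ih =>
    match n, ih with
    | 0, _ =>
      have e1 : ((0:ℕ):ℤ) - 1 + (L:ℤ) = (L:ℤ) - 1 := by omega
      have e2 : ((0:ℕ):ℤ) - 1 = (-1 : ℤ) := by omega
      rw [e1, e2, hs_neg, ht_neg]
      constructor <;> ring
    | 1, _ =>
      have e1 : ((1:ℕ):ℤ) - 1 + (L:ℤ) = (L:ℤ) := by omega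
      have e2 : ((1:ℕ):ℤ) - 1 = (0 : ℤ) := by omega
      have ha : a ((L:ℤ)) = a 0 := by
        have := aper 0 le_rfl; rwa [zero_add] at this
      have hsL := hs_rec (L:ℤ) (by exact_mod_cast hL)
      have htL := ht_rec (L:ℤ) (by exact_mod_cast hL)
      rw [e1, e2, hs_zero, ht_zero, hsL, htL, ha]
      constructor <;> ring
    | (n+2), ih =>
      have ih1 := ih (n+1) (by omega)
      have ih0 := ih n (by omega)
      have e : ((n+2:ℕ):ℤ) - 1 = (n:ℤ) + 1 := by omega
      have e1 : ((n+1:ℕ):ℤ) - 1 = (n:ℤ) := by omega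
      rw [e1] at ih1
      rw [e]
      have hrecs := hs_rec ((n:ℤ) + 1 + L) (by omega)
      have hrect := ht_rec ((n:ℤ) + 1 + L) (by omega)
      have ha' := aper ((n:ℤ)+1) (by omega)
      have f1 : (n:ℤ) + 1 + (L:ℤ) - 1 = (n:ℤ) + (L:ℤ) := by ring
      have f2 : (n:ℤ) + 1 + (L:ℤ) - 2 = (n:ℤ) - 1 + (L:ℤ) := by ring
      rw [f1, f2, ha'] at hrecs hrect
      have hsn := hs_rec ((n:ℤ)+1) (by omega)
      have htn := ht_rec ((n:ℤ)+1) (by omega)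
      have g1 : (n:ℤ) + 1 - 1 = (n:ℤ) := by ring
      have g2 : (n:ℤ) + 1 - 2 = (n:ℤ) - 1 := by ring
      rw [g1, g2] at hsn htn
      constructor
      · rw [hrecs, ih1.1, ih0.1, hsn, htn]; ring
      · rw [hrect, ih1.2, ih0.2, hsn, htn]; ring

lemma conv_det (a s t : ℤ → ℤ)
    (hs_neg : s (-1) = 1) (ht_neg : t (-1) = 0) (hs_zero : s 0 = a 0) (ht_zero : t 0 = 1)
    (hs_rec : ∀ k : ℤ, 1 ≤ k → s k = a k * s (k-1) + s (k-2))
    (ht_rec : ∀ k : ℤ, 1 ≤ k → t k = a k * t (k-1) + t (k-2)) :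
    ∀ n : ℕ, s (n:ℤ) * t ((n:ℤ)-1) - s ((n:ℤ)-1) * t (n:ℤ) = (-1)^(n+1) := by
  intro n
  induction n with
  | zero =>
    have c0 : ((0:ℕ):ℤ) = 0 := Nat.cast_zero
    have e2 : ((0:ℕ):ℤ) - 1 = (-1 : ℤ) := by omega
    rw [e2, c0, hs_neg, ht_neg, hs_zero, ht_zero]
    norm_num
  | succ n ihn =>
    have e : ((n+1:ℕ):ℤ) = (n:ℤ) + 1 := by omega
    have hsn := hs_rec ((n:ℤ)+1) (by omega)
    have htn := ht_rec ((n:ℤ)+1) (by omega)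
    have g1 : (n:ℤ) + 1 - 1 = (n:ℤ) := by ring
    have g2 : (n:ℤ) + 1 - 2 = (n:ℤ) - 1 := by ring
    rw [g1, g2] at hsn htn
    rw [e, g1, hsn, htn, pow_succ]
    linear_combination (-1 : ℤ) * ihn

lemma conv_pos (a s t : ℤ → ℤ)
    (ha_pos : ∀ k : ℤ, 0 ≤ k → 0 < a k)
    (hs_neg : s (-1) = 1) (ht_neg : t (-1) = 0) (hs_zero : s 0 = a 0) (ht_zero : t 0 = 1)
    (hs_rec : ∀ k : ℤ, 1 ≤ k → s k = a k * s (k-1) + s (k-2))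
    (ht_rec : ∀ k : ℤ, 1 ≤ k → t k = a k * t (k-1) + t (k-2)) :
    ∀ n : ℕ, 0 < s (n:ℤ) ∧ 0 < t (n:ℤ) := by
  intro n
  induction n using Nat.strong_induction_on with
  | _ n ih =>
    match n, ih with
    | 0, _ =>
      have c0 : ((0:ℕ):ℤ) = 0 := Nat.cast_zero
      rw [c0, hs_zero, ht_zero]
      exact ⟨ha_pos 0 le_rfl, one_pos⟩
    | 1, ih =>
      have c1 : ((1:ℕ):ℤ) = 1 := Nat.cast_one
      have hs1 := hs_rec 1 le_rfl
      have ht1 := ht_rec 1 le_rfl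
      norm_num at hs1 ht1
      rw [c1, hs1, ht1, hs_neg, ht_neg, hs_zero, ht_zero]
      have ha1 := ha_pos 1 (by omega)
      have ha0 := ha_pos 0 le_rfl
      constructor <;> nlinarith
    | (n+2), ih =>
      have ih1 := ih (n+1) (by omega)
      have ih0 := ih n (by omega)
      have e : ((n+2:ℕ):ℤ) = (n:ℤ) + 2 := by omega
      have hsn := hs_rec ((n:ℤ)+2) (by omega)
      have htn := ht_rec ((n:ℤ)+2) (by omega)
      have g1 : (n:ℤ) + 2 - 1 = ((n+1:ℕ):ℤ) := by omega
      have g2 : (n:ℤ) + 2 - 2 = (n:ℤ) := by ring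
      rw [g1, g2] at hsn htn
      have ha2 := ha_pos ((n:ℤ)+2) (by omega)
      rw [e, hsn, htn]
      constructor <;> nlinarith [ih1.1, ih1.2, ih0.1, ih0.2]


set_option maxHeartbeats 1000000 in
/-- Lemma 1, first case: if `s k ≡ 3 (mod 4)` and `t k = 2^(m+f) t'` with `t'` odd and
`1 - m ≤ f ≤ e - 2`, then `t (k+L) = 2^(m+f) t''` with `t''` odd, `t'' ≡ t' (mod 4)`,
and the Kronecker symbols at `k + L` and `k` coincide. -/
theorem kronecker_step_small_f
    (a s t : ℤ → ℤ) (l : ℕ) (hl : 1 ≤ l)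
    (ha_pos : ∀ k : ℤ, 0 ≤ k → 0 < a k)
    (ha_per : ∀ k : ℤ, 0 ≤ k → a (k + l) = a k)
    (hs_neg : s (-1) = 1) (ht_neg : t (-1) = 0)
    (hs_zero : s 0 = a 0) (ht_zero : t 0 = 1)
    (hs_rec : ∀ k : ℤ, 1 ≤ k → s k = a k * s (k - 1) + s (k - 2))
    (ht_rec : ∀ k : ℤ, 1 ≤ k → t k = a k * t (k - 1) + t (k - 2))
    (L : ℕ) (hL_pos : 0 < L) (hL_even : Even L) (hL_mul : l ∣ L)
    (hD : s ((L : ℤ) - 1) ≡ 1 [ZMOD 4] ∧ s ((L : ℤ) - 2) ≡ 0 [ZMOD 4] ∧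
          t ((L : ℤ) - 1) ≡ 0 [ZMOD 4] ∧ t ((L : ℤ) - 2) ≡ 1 [ZMOD 4])
    (hJpar : ∀ k : ℤ, 0 ≤ k → t (k + L) ≡ t k [ZMOD 2])
    (hJper : ∀ k : ℤ, 0 ≤ k → Odd (t k) →
      jacobiSym (s (k + L)) (t (k + L)).toNat = jacobiSym (s k) (t k).toNat)
    (m : ℕ) (hm : 2 ≤ m) (x y u v : ℤ)
    (hDU : s ((L : ℤ) - 1) = 1 + 2 ^ m * x ∧ s ((L : ℤ) - 2) = 2 ^ m * y ∧
           t ((L : ℤ) - 1) = 2 ^ m * u ∧ t ((L : ℤ) - 2) = 1 + 2 ^ m * v)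
    (hUodd : Odd x ∨ Odd y ∨ Odd u ∨ Odd v)
    (e : ℕ) (u' : ℤ) (hu_ne : u ≠ 0) (hu : u = 2 ^ e * u') (hu'_odd : Odd u')
    (k : ℤ) (hk : 0 ≤ k) (hsk : s k ≡ 3 [ZMOD 4])
    (f : ℤ) (hf1 : 1 - (m : ℤ) ≤ f) (hf2 : f ≤ (e : ℤ) - 2)
    (g : ℕ) (hg : (g : ℤ) = (m : ℤ) + f)
    (t' : ℤ) (ht'_odd : Odd t') (htk : t k = 2 ^ g * t') :
    ∃ t'' : ℤ, Odd t'' ∧ t'' ≡ t' [ZMOD 4] ∧ t (k + L) = 2 ^ g * t'' ∧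
      kron (s (k + L)) (t (k + L)).toNat = kron (s k) (t k).toNat := by
  obtain ⟨hP0, hQ0, hR0, hW0⟩ := hDU
  have hL2 : 2 ≤ L := by rcases hL_even with ⟨r, hr⟩; omega
  have hL0 : (0:ℤ) ≤ (L:ℤ) := Int.natCast_nonneg L
  have hg1 : 1 ≤ g := by omega
  obtain ⟨c, hgc, hc2⟩ : ∃ c : ℕ, m + e = g + c ∧ 2 ≤ c := ⟨m + e - g, by omega, by omega⟩
  -- periodicity of a with period L
  have aperN : ∀ (c : ℕ) (j : ℤ), 0 ≤ j → a (j + (l * c : ℕ)) = a j := by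
    intro c
    induction c with
    | zero => intro j hj; norm_num
    | succ c ih =>
      intro j hj
      have e : (j + ((l * (c+1) : ℕ) : ℤ)) = (j + (l * c : ℕ)) + (l:ℕ) := by push_cast; ring
      rw [e, ha_per _ (by positivity)]
      exact ih j hj
  have aper : ∀ j : ℤ, 0 ≤ j → a (j + L) = a j := by
    obtain ⟨c', hc'⟩ := hL_mul
    intro j hj
    have := aperN c' j hj
    rwa [← hc'] at this
  have key := conv_shift a s t L (by omega) hs_neg ht_neg hs_zero ht_zero hs_rec ht_rec aper
  have det := conv_det a s t hs_neg ht_neg hs_zero ht_zero hs_rec ht_rec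
  have pos := conv_pos a s t ha_pos hs_neg ht_neg hs_zero ht_zero hs_rec ht_rec
  have posZ : ∀ j : ℤ, 0 ≤ j → 0 < s j ∧ 0 < t j := by
    intro j hj; have := pos j.toNat; rwa [Int.toNat_of_nonneg hj] at this
  have keyZ : ∀ j : ℤ, -1 ≤ j →
      s (j + L) = s ((L:ℤ)-1) * s j + s ((L:ℤ)-2) * t j ∧
      t (j + L) = t ((L:ℤ)-1) * s j + t ((L:ℤ)-2) * t j := by
    intro j hj
    have h := key (j+1).toNat
    have hcast : (((j+1).toNat : ℕ) : ℤ) - 1 = j := by omega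
    rwa [hcast] at h
  have detL : s ((L:ℤ)-1) * t ((L:ℤ)-2) - s ((L:ℤ)-2) * t ((L:ℤ)-1) = 1 := by
    have h := det (L-1)
    have e1 : (((L-1:ℕ)):ℤ) = (L:ℤ) - 1 := by omega
    have e2 : (((L-1:ℕ)):ℤ) - 1 = (L:ℤ) - 2 := by omega
    rw [e2, e1, show L - 1 + 1 = L from by omega, Even.neg_one_pow hL_even] at h
    exact h
  -- positivity facts
  have hTpos : 0 < t k := (posZ k hk).2
  have ht'pos : 0 < t' := by
    have h2g : (0:ℤ) < 2^g := pow_pos (by norm_num) g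
    have hmul : 0 < 2^g * t' := by rw [← htk]; exact hTpos
    rcases mul_pos_iff.mp hmul with h | h
    · exact h.2
    · linarith [h.1]
  obtain ⟨g', hg'⟩ : ∃ g', g = g' + 1 := ⟨g - 1, by omega⟩
  have hTeven : t k = 2 * (2 ^ g' * t') := by rw [htk, hg', pow_succ]; ring
  have hk1 : 1 ≤ k := by
    rcases (by omega : k = 0 ∨ 1 ≤ k) with h | h
    · exfalso
      rw [h, ht_zero] at hTeven
      have : (2:ℤ) ∣ 1 := ⟨2 ^ g' * t', hTeven⟩
      norm_num at this
    · exact h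
  -- instantiations
  have hkey1 := keyZ k (by omega)
  have hkey0 := keyZ (k-1) (by omega)
  have hdetk : s k * t (k-1) - s (k-1) * t k = (-1:ℤ)^(k.toNat+1) := by
    have h := det k.toNat
    rwa [Int.toNat_of_nonneg hk] at h
  have hBpos : 0 < t (k-1) := (posZ (k-1) (by omega)).2
  have hB'pos : 0 < t (k-1+(L:ℤ)) := (posZ (k-1+(L:ℤ)) (by omega)).2
  have hT'pos : 0 < t (k+(L:ℤ)) := (posZ (k+(L:ℤ)) (by omega)).2
  -- next: abbreviations
  set δ : ℤ := (-1:ℤ)^(k.toNat+1) with hδdef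
  have hδ : δ = 1 ∨ δ = -1 := by
    rcases Nat.even_or_odd (k.toNat+1) with h | h
    · exact Or.inl (Even.neg_one_pow h)
    · exact Or.inr (Odd.neg_one_pow h)
  have hδδ : δ * δ = 1 := by rcases hδ with h|h <;> rw [h] <;> norm_num
  set P : ℤ := s ((L:ℤ)-1) with hPdef
  set Q : ℤ := s ((L:ℤ)-2) with hQdef
  set R : ℤ := t ((L:ℤ)-1) with hRdef
  set W : ℤ := t ((L:ℤ)-2) with hWdef
  set A : ℤ := s (k-1) with hAdef
  set B : ℤ := t (k-1) with hBdef
  set S : ℤ := s k with hSdef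
  set T : ℤ := t k with hTdef
  set A' : ℤ := s (k-1+(L:ℤ)) with hA'def
  set B' : ℤ := t (k-1+(L:ℤ)) with hB'def
  set S' : ℤ := s (k+(L:ℤ)) with hS'def
  set T' : ℤ := t (k+(L:ℤ)) with hT'def
  set t'' : ℤ := 2^c * u' * S + (1 + 2^m * v) * t' with ht''def
  -- determinant at k+L
  have hdet' : S' * B' - A' * T' = δ := by
    rw [hkey1.1, hkey1.2, hkey0.1, hkey0.2]
    linear_combination (S * B - A * T) * detL + hdetk
  -- T' = 2^g * t''
  have hpow : (2:ℤ)^m * 2^e = 2^g * 2^c := by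
    rw [← pow_add, ← pow_add, hgc]
  have hT'' : T' = 2^g * t'' := by
    rw [hkey1.2, hR0, hW0, htk, hu, ht''def]
    linear_combination (u' * S) * hpow
  -- congruence facts
  obtain ⟨m2, hm2⟩ : ∃ m2, m = m2 + 2 := ⟨m - 2, by omega⟩
  obtain ⟨c2, hcc2⟩ : ∃ c2, c = c2 + 2 := ⟨c - 2, by omega⟩
  have ht''4 : t'' ≡ t' [ZMOD 4] := by
    apply Int.modEq_iff_dvd.mpr
    refine ⟨-(2^c2 * u' * S + 2^m2 * v * t'), ?_⟩
    rw [ht''def, hcc2, hm2, pow_add, pow_add]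
    ring
  have ht''odd : Odd t'' := by
    have h4 : (4:ℤ) ∣ t' - t'' := Int.modEq_iff_dvd.mp ht''4
    have h2 : (2:ℤ) ∣ t' - t'' := dvd_trans (by norm_num) h4
    have := Int.odd_iff.mp ht'_odd
    rw [Int.odd_iff]
    omega
  have ht''pos : 0 < t'' := by
    have h2g : (0:ℤ) < 2^g := pow_pos (by norm_num) g
    have hmul : 0 < 2^g * t'' := by rw [← hT'']; exact hT'pos
    rcases mul_pos_iff.mp hmul with h | h
    · exact h.2
    · linarith [h.1]
  -- parity of S, B, S', B'
  have hSB : S * B = δ + A * (2 * (2^g' * t')) := by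
    linear_combination hdetk + A * hTeven
  have hSBodd : Odd (S * B) := by
    rcases hδ with h | h <;> rw [h] at hSB
    · exact ⟨A * (2^g' * t'), by linear_combination hSB⟩
    · exact ⟨A * (2^g' * t') - 1, by linear_combination hSB⟩
  obtain ⟨hSodd, hBodd⟩ := Int.odd_mul.mp hSBodd
  have hT'even : T' = 2 * (2^g' * t'') := by rw [hT'', hg', pow_succ]; ring
  have hS'B' : S' * B' = δ + A' * (2 * (2^g' * t'')) := by
    linear_combination hdet' + A' * hT'even
  have hS'B'odd : Odd (S' * B') := by
    rcases hδ with h | h <;> rw [h] at hS'B'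
    · exact ⟨A' * (2^g' * t''), by linear_combination hS'B'⟩
    · exact ⟨A' * (2^g' * t'') - 1, by linear_combination hS'B'⟩
  obtain ⟨hS'odd, hB'odd⟩ := Int.odd_mul.mp hS'B'odd
  -- Jacobi periodicity at k-1
  have hJ : jacobiSym A' B'.toNat = jacobiSym A B.toNat := hJper (k-1) (by omega) hBodd
  -- mod 8 congruences
  have hS'c : S' ≡ (1 + 2^m*x) * S [ZMOD 8] := by
    apply Int.modEq_iff_dvd.mpr
    refine ⟨-(2^(m+g-3) * (y * t')), ?_⟩
    have h8 : (2:ℤ)^m * 2^g = 8 * 2^(m+g-3) := by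
      rw [← pow_add, show m + g = 3 + (m+g-3) from by omega, pow_add]
      norm_num
    rw [hkey1.1, hP0, hQ0, htk]
    linear_combination (-(y * t')) * h8
  have hB'c : B' ≡ (1 + 2^m*v) * B [ZMOD 8] := by
    apply Int.modEq_iff_dvd.mpr
    refine ⟨-(2^(m+e-3) * (u' * A)), ?_⟩
    have h8 : (2:ℤ)^m * 2^e = 8 * 2^(m+e-3) := by
      rw [← pow_add, show m + e = 3 + (m+e-3) from by omega, pow_add]
      norm_num
    rw [hkey0.2, hR0, hW0, hu]
    linear_combination (-(u' * A)) * h8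
  have hww' : (1 + 2^m*v) * (1 + 2^m*x) ≡ 1 [ZMOD 8] := by
    apply Int.modEq_iff_dvd.mpr
    refine ⟨-(2^(m+m-3) * (y * u)), ?_⟩
    have h8 : (2:ℤ)^m * 2^m = 8 * 2^(m+m-3) := by
      rw [← pow_add, show m + m = 3 + (m+m-3) from by omega, pow_add]
      norm_num
    have detL' : (1 + 2^m*x) * (1 + 2^m*v) - (2^m*y) * (2^m*u) = 1 := by
      rw [← hP0, ← hQ0, ← hR0, ← hW0]; exact detL
    linear_combination -detL' - (y*u) * h8
  have hw4 : (1 + 2^m * v : ℤ) ≡ 1 [ZMOD 4] := by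
    apply Int.modEq_iff_dvd.mpr
    refine ⟨-(2^m2 * v), ?_⟩
    rw [hm2, pow_add]
    ring
  have hB4 : B' ≡ B [ZMOD 4] := by
    calc B' ≡ (1 + 2^m*v) * B [ZMOD 4] := hB'c.of_dvd (by norm_num)
      _ ≡ 1 * B [ZMOD 4] := (hw4.mul_right B)
      _ = B := one_mul B
  -- coprimality
  have hdetk' : S * B - A * (2^g * t') = δ := by rw [← htk]; exact hdetk
  have hdet'' : S' * B' - A' * (2^g * t'') = δ := by rw [← hT'']; exact hdet'
  have hcopAB : IsCoprime A B := ⟨-(δ*T), δ*S, by linear_combination δ * hdetk + hδδ⟩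
  have hcopA'B' : IsCoprime A' B' := ⟨-(δ*T'), δ*S', by linear_combination δ * hdet' + hδδ⟩
  have hcopBt' : IsCoprime B t' := ⟨δ*S, -(δ*(A*2^g)), by linear_combination δ * hdetk' + hδδ⟩
  have hcopB't'' : IsCoprime B' t'' := ⟨δ*S', -(δ*(A'*2^g)), by linear_combination δ * hdet'' + hδδ⟩
  -- natural number versions
  have hb : ((B.toNat : ℕ) : ℤ) = B := Int.toNat_of_nonneg hBpos.le
  have hb' : ((B'.toNat : ℕ) : ℤ) = B' := Int.toNat_of_nonneg hB'pos.le
  have hn1 : ((t'.toNat : ℕ) : ℤ) = t' := Int.toNat_of_nonneg ht'pos.le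
  have hn2 : ((t''.toNat : ℕ) : ℤ) = t'' := Int.toNat_of_nonneg ht''pos.le
  have hb2 : B.toNat % 2 = 1 := by have := Int.odd_iff.mp hBodd; omega
  have hb'2 : B'.toNat % 2 = 1 := by have := Int.odd_iff.mp hB'odd; omega
  have hn12 : t'.toNat % 2 = 1 := by have := Int.odd_iff.mp ht'_odd; omega
  have hn22 : t''.toNat % 2 = 1 := by have := Int.odd_iff.mp ht''odd; omega
  have hboddN : Odd B.toNat := Nat.odd_iff.mpr hb2
  have hb'oddN : Odd B'.toNat := Nat.odd_iff.mpr hb'2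
  have hn1oddN : Odd t'.toNat := Nat.odd_iff.mpr hn12
  have hn2oddN : Odd t''.toNat := Nat.odd_iff.mpr hn22
  have hb4 : B'.toNat % 4 = B.toNat % 4 := by
    have h4 : B' % 4 = B % 4 := hB4
    omega
  have hn4 : t''.toNat % 4 = t'.toNat % 4 := by
    have h4 : t'' % 4 = t' % 4 := ht''4
    omega
  -- gcd facts
  have hgcdAB : Int.gcd A ((B.toNat : ℕ) : ℤ) = 1 := by
    rw [hb]; exact Int.isCoprime_iff_gcd_eq_one.mp hcopAB
  have hgcdBt' : Int.gcd B ((t'.toNat : ℕ) : ℤ) = 1 := by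
    rw [hn1]; exact Int.isCoprime_iff_gcd_eq_one.mp hcopBt'
  have hgcdB't'' : Int.gcd B' ((t''.toNat : ℕ) : ℤ) = 1 := by
    rw [hn2]; exact Int.isCoprime_iff_gcd_eq_one.mp hcopB't''
  -- Jacobi computations, unprimed
  have h1 : jacobiSym A B.toNat * jacobiSym T B.toNat = jacobiSym (-δ) B.toNat := by
    rw [← jacobiSym.mul_left]
    apply jacobiSym.mod_left'
    exact Int.modEq_iff_dvd.mpr ⟨-S, by rw [hb]; linear_combination hdetk⟩
  have hJ2 : jacobiSym 2 B.toNat = kronChi B := by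
    rw [jacobiSym.at_two hboddN, kronChi_eq_chi8 hBodd]
    congr 1
    conv_rhs => rw [← hb]
    norm_cast
  have hTb : jacobiSym T B.toNat = kronChi B ^ g * jacobiSym t' B.toNat := by
    rw [htk, jacobiSym.mul_left, jacobiSym.pow_left, hJ2]
  have hrec1 := jacobiSym.quadratic_reciprocity_if hn12 hb2
  set sg : ℤ := if t'.toNat % 4 = 3 ∧ B.toNat % 4 = 3 then -1 else 1 with hsgdef
  have hsgpm : sg = 1 ∨ sg = -1 := by rw [hsgdef]; split_ifs <;> simp
  have hsg : jacobiSym t' B.toNat = sg * jacobiSym B t'.toNat := by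
    have h1' : jacobiSym ((t'.toNat : ℕ) : ℤ) B.toNat = jacobiSym t' B.toNat := by rw [hn1]
    have h2' : jacobiSym ((B.toNat : ℕ) : ℤ) t'.toNat = jacobiSym B t'.toNat := by rw [hb]
    rw [← h1', ← h2', ← hrec1, hsgdef]
    split_ifs <;> ring
  have h4 : jacobiSym S t'.toNat * jacobiSym B t'.toNat = jacobiSym δ t'.toNat := by
    rw [← jacobiSym.mul_left]
    apply jacobiSym.mod_left'
    exact Int.modEq_iff_dvd.mpr ⟨-(A*2^g), by rw [hn1]; linear_combination -hdetk'⟩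
  have hstar : (jacobiSym A B.toNat * sg) * (kronChi B ^ g * jacobiSym B t'.toNat)
      = jacobiSym (-δ) B.toNat := by
    rw [hTb, hsg] at h1
    linear_combination h1
  -- Jacobi computations, primed
  have h1' : jacobiSym A' B'.toNat * jacobiSym T' B'.toNat = jacobiSym (-δ) B'.toNat := by
    rw [← jacobiSym.mul_left]
    apply jacobiSym.mod_left'
    exact Int.modEq_iff_dvd.mpr ⟨-S', by rw [hb']; linear_combination hdet'⟩
  have hJ2' : jacobiSym 2 B'.toNat = kronChi B' := by
    rw [jacobiSym.at_two hb'oddN, kronChi_eq_chi8 hB'odd]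
    congr 1
    conv_rhs => rw [← hb']
    norm_cast
  have hTb' : jacobiSym T' B'.toNat = kronChi B' ^ g * jacobiSym t'' B'.toNat := by
    rw [hT'', jacobiSym.mul_left, jacobiSym.pow_left, hJ2']
  have hrec2 := jacobiSym.quadratic_reciprocity_if hn22 hb'2
  rw [hn4, hb4] at hrec2
  have hsg' : jacobiSym t'' B'.toNat = sg * jacobiSym B' t''.toNat := by
    have ha1 : jacobiSym ((t''.toNat : ℕ) : ℤ) B'.toNat = jacobiSym t'' B'.toNat := by rw [hn2]
    have ha2 : jacobiSym ((B'.toNat : ℕ) : ℤ) t''.toNat = jacobiSym B' t''.toNat := by rw [hb']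
    rw [← ha1, ← ha2, ← hrec2, hsgdef]
    split_ifs <;> ring
  have h4' : jacobiSym S' t''.toNat * jacobiSym B' t''.toNat = jacobiSym δ t''.toNat := by
    rw [← jacobiSym.mul_left]
    apply jacobiSym.mod_left'
    exact Int.modEq_iff_dvd.mpr ⟨-(A'*2^g), by rw [hn2]; linear_combination -hdet''⟩
  have hmδ : jacobiSym (-δ) B'.toNat = jacobiSym (-δ) B.toNat := by
    rcases hδ with h | h <;> rw [h]
    · rw [jacobiSym.at_neg_one hb'oddN, jacobiSym.at_neg_one hboddN,
        ZMod.χ₄_nat_mod_four B'.toNat, ZMod.χ₄_nat_mod_four B.toNat, hb4]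
    · norm_num
  have hjδ : jacobiSym δ t''.toNat = jacobiSym δ t'.toNat := by
    rcases hδ with h | h <;> rw [h]
    · rw [jacobiSym.one_left, jacobiSym.one_left]
    · rw [jacobiSym.at_neg_one hn2oddN, jacobiSym.at_neg_one hn1oddN,
        ZMod.χ₄_nat_mod_four t''.toNat, ZMod.χ₄_nat_mod_four t'.toNat, hn4]
  have hstar' : (jacobiSym A B.toNat * sg) * (kronChi B' ^ g * jacobiSym B' t''.toNat)
      = jacobiSym (-δ) B.toNat := by
    rw [hTb', hsg', hJ, hmδ] at h1'
    linear_combination h1'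
  -- cancel
  have hsgne : sg ≠ 0 := by rcases hsgpm with h|h <;> rw [h] <;> norm_num
  have hne : jacobiSym A B.toNat * sg ≠ 0 :=
    mul_ne_zero (jacobiSym.ne_zero hgcdAB) hsgne
  have F1 : kronChi B ^ g * jacobiSym B t'.toNat
      = kronChi B' ^ g * jacobiSym B' t''.toNat :=
    mul_left_cancel₀ hne (hstar.trans hstar'.symm)
  have F2 : jacobiSym S t'.toNat * jacobiSym B t'.toNat
      = jacobiSym S' t''.toNat * jacobiSym B' t''.toNat := by
    rw [h4, h4', hjδ]
  have hβ : jacobiSym B t'.toNat ≠ 0 := jacobiSym.ne_zero hgcdBt'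
  have hβ' : jacobiSym B' t''.toNat ≠ 0 := jacobiSym.ne_zero hgcdB't''
  have hcc : kronChi B ^ g * jacobiSym S' t''.toNat
      = kronChi B' ^ g * jacobiSym S t'.toNat := by
    apply mul_right_cancel₀ (mul_ne_zero hβ hβ')
    linear_combination (jacobiSym S' t''.toNat * jacobiSym B' t''.toNat) * F1
      - (kronChi B' ^ g * jacobiSym B' t''.toNat) * F2
  -- chi multiplicativity
  have hc8 : ((S' * B' : ℤ) : ZMod 8) = ((S * B : ℤ) : ZMod 8) := by
    rw [ZMod.intCast_eq_intCast_iff]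
    calc S' * B' ≡ ((1+2^m*x)*S) * ((1+2^m*v)*B) [ZMOD 8] := Int.ModEq.mul hS'c hB'c
      _ = ((1+2^m*v)*(1+2^m*x)) * (S*B) := by ring
      _ ≡ 1 * (S*B) [ZMOD 8] := Int.ModEq.mul hww' (Int.ModEq.refl _)
      _ = S * B := one_mul _
  have E1 : kronChi S' * kronChi B' = kronChi S * kronChi B := by
    rw [kronChi_eq_chi8 hS'odd, kronChi_eq_chi8 hB'odd, kronChi_eq_chi8 hSodd,
      kronChi_eq_chi8 hBodd, ← map_mul, ← map_mul, ← Int.cast_mul, ← Int.cast_mul, hc8]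
  have F3 : kronChi S' ^ g * kronChi B' ^ g = kronChi S ^ g * kronChi B ^ g := by
    rw [← mul_pow, ← mul_pow, E1]
  have hαα : kronChi B ^ g * kronChi B ^ g = 1 := by
    rcases kronChi_pm hBodd with h|h <;> rw [h]
    · norm_num
    · rw [← mul_pow]; norm_num
  have final : kronChi S' ^ g * jacobiSym S' t''.toNat
      = kronChi S ^ g * jacobiSym S t'.toNat := by
    calc kronChi S' ^ g * jacobiSym S' t''.toNat
        = (kronChi S' ^ g * jacobiSym S' t''.toNat) * (kronChi B ^ g * kronChi B ^ g) := by
          rw [hαα, mul_one]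
      _ = (kronChi S' ^ g * kronChi B ^ g) * (kronChi B ^ g * jacobiSym S' t''.toNat) := by ring
      _ = (kronChi S' ^ g * kronChi B ^ g) * (kronChi B' ^ g * jacobiSym S t'.toNat) := by
          rw [hcc]
      _ = (kronChi S' ^ g * kronChi B' ^ g) * (kronChi B ^ g * jacobiSym S t'.toNat) := by ring
      _ = (kronChi S ^ g * kronChi B ^ g) * (kronChi B ^ g * jacobiSym S t'.toNat) := by
          rw [F3]
      _ = (kronChi S ^ g * jacobiSym S t'.toNat) * (kronChi B ^ g * kronChi B ^ g) := by ring
      _ = kronChi S ^ g * jacobiSym S t'.toNat := by rw [hαα, mul_one]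
  -- convert kron
  have hTn : T.toNat = 2^g * t'.toNat := by
    have hh : T = ((2^g * t'.toNat : ℕ) : ℤ) := by
      push_cast
      rw [hn1]
      exact htk
    rw [hh, Int.toNat_natCast]
  have hT'n : T'.toNat = 2^g * t''.toNat := by
    have hh : T' = ((2^g * t''.toNat : ℕ) : ℤ) := by
      push_cast
      rw [hn2]
      exact hT''
    rw [hh, Int.toNat_natCast]
  refine ⟨t'', ht''odd, ht''4, hT'', ?_⟩
  rw [hTn, hT'n, kron_two_pow_mul S g t'.toNat hn1oddN (by omega),
    kron_two_pow_mul S' g t''.toNat hn2oddN (by omega)]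
  exact final
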